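/- Let π be a Nash equilibrium with equilibrium density f, and for each j let C_j = min_{y ∈ ℝ} J(x_j, y, f) and E_j = argmin_{y ∈ ℝ} J(x_j, y, f). Then for every j, E_j = {y ∈ ℝ : C_j − (x_j − y)^2 ≥ max(C_k − (x_k − y)^2, 0) for all k = 1, …, n}. -/

import Mathlib

open MeasureTheory Set

/-- The cost `J(x, y, f) = (x - y)^2 + f(y)`. -/
noncomputable def Jcost (f : ℝ → ℝ) (x y : ℝ) : ℝ := (x - y) ^ 2 + f y

/-- The support of a measure `π` on `ℝ × ℝ`: points all of whose open
neighborhoods have positive measure. -/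
def msupport (π : Measure (ℝ × ℝ)) : Set (ℝ × ℝ) :=
  {p | ∀ U : Set (ℝ × ℝ), IsOpen U → p ∈ U → 0 < π U}

/-- `π` is a Nash equilibrium with equilibrium density `f` for the initial
measure `m = ∑ j, a_j δ_{x_j}`:
`π` is a Borel probability measure on `ℝ × ℝ`, `f` is continuous, nonnegative,
with total integral 1; the first marginal of `π` is `m`; the second marginal of
`π` has density `f` with respect to Lebesgue measure; and for `π`-a.e. `(x, y)`,
`y` minimizes `J(x, ·, f)`. -/
def IsNash (n : ℕ) (x a : Fin n → ℝ) (π : Measure (ℝ × ℝ)) (f : ℝ → ℝ) : Prop :=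
  IsProbabilityMeasure π ∧
  Continuous f ∧ (∀ y, 0 ≤ f y) ∧ (∫ y, f y) = 1 ∧
  π.map Prod.fst = ∑ j : Fin n, ENNReal.ofReal (a j) • Measure.dirac (x j) ∧
  π.map Prod.snd = volume.withDensity (fun y => ENNReal.ofReal (f y)) ∧
  (∀ᵐ p ∂π, ∀ z : ℝ, Jcost f p.1 p.2 ≤ Jcost f p.1 z)

/-- With `C_j = min_y J(x_j, y, f)` and `E_j = argmin_y J(x_j, y, f)`, one has
`E_j = {y : C_j - (x_j - y)^2 ≥ (C_k - (x_k - y)^2)_+ for all k}`. -/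
theorem stmt_2 (n : ℕ) (hn : 1 ≤ n) (x : Fin n → ℝ) (hx : StrictMono x)
    (a : Fin n → ℝ) (ha : ∀ j, 0 < a j) (hsum : ∑ j, a j = 1)
    (π : Measure (ℝ × ℝ)) (f : ℝ → ℝ) (hNash : IsNash n x a π f)
    (C : Fin n → ℝ)
    (hC : ∀ j, IsLeast (Set.range fun y => Jcost f (x j) y) (C j)) :
    ∀ j, {y : ℝ | Jcost f (x j) y = C j} =
      {y : ℝ | ∀ k, max (C k - (x k - y) ^ 2) 0 ≤ C j - (x j - y) ^ 2} := by
  obtain ⟨hprob, hfc, hf0, hint, hfst, hsnd, hae⟩ := hNash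
  -- lower bound: C k ≤ Jcost f (x k) y for all y
  have hCle : ∀ k (y : ℝ), C k ≤ (x k - y) ^ 2 + f y := fun k y => (hC k).2 ⟨y, rfl⟩
  -- key : f is bounded above by the upper envelope
  set S : Set ℝ := {y | ∀ k, max (C k - (x k - y) ^ 2) 0 < f y} with hSdef
  have hS_open : IsOpen S := by
    have : S = ⋂ k, {y | max (C k - (x k - y) ^ 2) 0 < f y} := by
      ext y; simp [hSdef, Set.mem_iInter]
    rw [this]
    exact isOpen_iInter_of_finite fun k =>
      isOpen_lt (((continuous_const.sub
        ((continuous_const.sub continuous_id).pow 2)).max continuous_const)) hfc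
  have hS_empty : S = ∅ := by
    by_contra hne
    obtain ⟨y0, hy0⟩ := Set.nonempty_iff_ne_empty.2 hne
    have hfy0 : 0 < f y0 := lt_of_le_of_lt (le_max_right _ 0) (hy0 ⟨0, hn⟩)
    -- the set where the second marginal density exceeds f y0 / 2, inside S
    have hU : IsOpen (S ∩ f ⁻¹' Set.Ioi (f y0 / 2)) :=
      hS_open.inter (isOpen_Ioi.preimage hfc)
    have hy0U : y0 ∈ S ∩ f ⁻¹' Set.Ioi (f y0 / 2) := ⟨hy0, by simp; linarith⟩
    obtain ⟨ε, hε, hball⟩ := Metric.isOpen_iff.1 hU y0 hy0U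
    -- second marginal of S is positive
    have hpos : 0 < (π.map Prod.snd) S := by
      rw [hsnd, withDensity_apply _ hS_open.measurableSet]
      have h1 : Metric.ball y0 ε ⊆ S := fun z hz => (hball hz).1
      have h2 : (∫⁻ y in Metric.ball y0 ε, ENNReal.ofReal (f y0 / 2)) ≤
          ∫⁻ y in S, ENNReal.ofReal (f y) := by
        refine le_trans (setLIntegral_mono (by fun_prop) ?_) (lintegral_mono_set h1)
        intro z hz
        exact ENNReal.ofReal_le_ofReal (le_of_lt (hball hz).2)
      refine lt_of_lt_of_le ?_ h2
      rw [setLIntegral_const]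
      apply ENNReal.mul_pos
      · simp [ENNReal.ofReal_pos]; linarith
      · simp [Real.volume_ball]; positivity
    -- but π-a.e. point has second coordinate outside S
    have hfst0 : π {p : ℝ × ℝ | p.1 ∉ Set.range x} = 0 := by
      have hms : MeasurableSet ((Set.range x)ᶜ : Set ℝ) :=
        (Set.finite_range x).measurableSet.compl
      have : π {p : ℝ × ℝ | p.1 ∉ Set.range x} =
          (π.map Prod.fst) ((Set.range x)ᶜ) := by
        rw [Measure.map_apply measurable_fst hms]; rfl
      rw [this, hfst]
      simp only [Measure.finset_sum_apply, Measure.smul_apply, smul_eq_mul]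
      refine Finset.sum_eq_zero fun k _ => ?_
      rw [Measure.dirac_apply' _ hms]
      simp [Set.indicator_of_notMem, Set.mem_range]
    have haefst : ∀ᵐ p ∂π, p.1 ∈ Set.range x := by
      rw [MeasureTheory.ae_iff]; simpa using hfst0
    have haeS : ∀ᵐ p ∂π, p.2 ∉ S := by
      filter_upwards [hae, haefst] with p hmin hx'
      obtain ⟨k, hk⟩ := hx'
      intro hpS
      -- p.2 minimizes J(x k, ·), so Jcost f (x k) p.2 = C k
      obtain ⟨y', hy'⟩ := (hC k).1
      have h1 : Jcost f (x k) p.2 ≤ C k := by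
        rw [← hy']; simpa [hk] using hmin y'
      have h2 : C k ≤ Jcost f (x k) p.2 := hCle k p.2
      have heq : f p.2 = C k - (x k - p.2) ^ 2 := by
        have := le_antisymm h1 h2
        simp only [Jcost] at this; linarith
      have := hpS k
      rw [heq] at this
      exact absurd (le_max_left (C k - (x k - p.2) ^ 2) 0) (not_le.2 this)
    have hzero : (π.map Prod.snd) S = 0 := by
      rw [Measure.map_apply measurable_snd hS_open.measurableSet]
      rw [MeasureTheory.ae_iff] at haeS
      simp at haeS; exact haeS
    rw [hzero] at hpos
    exact lt_irrefl 0 hpos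
  have key : ∀ y : ℝ, ∃ k, f y ≤ max (C k - (x k - y) ^ 2) 0 := by
    intro y
    by_contra h
    push_neg at h
    have : y ∈ S := fun k => h k
    rw [hS_empty] at this
    exact this
  intro j
  ext y
  simp only [Set.mem_setOf_eq, Jcost]
  constructor
  · intro hy k
    have h1 : C k - (x k - y) ^ 2 ≤ f y := by have := hCle k y; linarith
    have h2 : (0 : ℝ) ≤ f y := hf0 y
    have : max (C k - (x k - y) ^ 2) 0 ≤ f y := max_le h1 h2
    linarith
  · intro hy
    obtain ⟨k, hk⟩ := key y
    have h1 : f y ≤ C j - (x j - y) ^ 2 := le_trans hk (hy k)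
    have h2 := hCle j y
    linarith
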